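/- Let (X,f,x) and (Y,g,y) be pointed minimal compact systems. Then (X,f,x) and (Y,g,y) are conjugate if and only if the interleaved sequences (x, f(x), x, f²(x), x, f³(x), …) and (y, g(y), y, g²(y), y, g³(y), …) have the same topological type (i.e. the sequences (a_n) and (b_n) with a_{2k} = x, a_{2k+1} = f^{k+1}(x), b_{2k} = y, b_{2k+1} = g^{k+1}(y) have the same topological type). -/

import Mathlib

open Filter Topology

section Defs

variable {X : Type*}

/-- The shift by `m`: `(shiftZ m z) n = z (n + m)`, so `shiftZ 1` is the left shift `S`
and `shiftZ m = S^m`. -/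
def shiftZ (m : ℤ) (z : ℤ → X) : ℤ → X := fun n => z (n + m)

/-- `Per_p(z)`: the set of positions `n` such that `z m = z n` for all `m ≡ n (mod p)`. -/
def PerSet (p : ℕ) (z : ℤ → X) : Set ℤ :=
  {n : ℤ | ∀ m : ℤ, (p : ℤ) ∣ m - n → z m = z n}

/-- `Per(z) = ⋃_{p ≥ 1} Per_p(z)`. -/
def PerFull (z : ℤ → X) : Set ℤ := {n : ℤ | ∃ p : ℕ, 1 ≤ p ∧ n ∈ PerSet p z}

/-- A Toeplitz sequence: every position is periodic. -/
def IsToeplitz (z : ℤ → X) : Prop := ∀ n : ℤ, n ∈ PerFull z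

/-- A non-periodic sequence: `S^m z ≠ z` for all `m ≠ 0`. -/
def NonPeriodicSeq (z : ℤ → X) : Prop := ∀ m : ℤ, m ≠ 0 → shiftZ m z ≠ z

/-- `u` and `v` have the same `p`-skeleton. -/
def SamePSkeleton (p : ℕ) (u v : ℤ → X) : Prop :=
  PerSet p u = PerSet p v ∧ ∀ n ∈ PerSet p u, u n = v n

/-- A period structure of a (non-periodic) Toeplitz sequence `z`. -/
def IsPeriodStructure (p : ℕ → ℕ) (z : ℤ → X) : Prop :=
  (∀ i, 1 ≤ p i) ∧
  (∀ i q, 1 ≤ q → q < p i → PerSet q z ≠ PerSet (p i) z) ∧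
  (∀ i, p i ∣ p (i + 1)) ∧
  (∀ n : ℤ, ∃ i, n ∈ PerSet (p i) z)

/-- A fast growing sequence of positive integers. -/
def FastGrowing (p : ℕ → ℕ) : Prop :=
  p 0 = 1 ∧ (∀ i, p i ∣ p (i + 1)) ∧ 3 ≤ p 1 ∧ ∀ i, 3 * p i ≤ p (i + 1)

/-- `oxDefined p i` is the set of positions of the Oxtoby sequence that are filled in
after step `i` of the inductive construction (step `i+1` fills, for each `k ≡ 0` or
`-1 (mod p_{i+1}/p_i)`, the still-empty positions `J(i,k)` of the block
`[k p_i, (k+1) p_i)`). -/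
def oxDefined (p : ℕ → ℕ) : ℕ → Set ℤ
  | 0 => ∅
  | i + 1 =>
      oxDefined p i ∪
        {n : ℤ | ∃ k : ℤ,
          (((p (i + 1) / p i : ℕ) : ℤ) ∣ k ∨ ((p (i + 1) / p i : ℕ) : ℤ) ∣ (k + 1)) ∧
          k * (p i : ℤ) ≤ n ∧ n < (k + 1) * (p i : ℤ) ∧ n ∉ oxDefined p i}

/-- `J(i,k)`: the set of positions in `[k p_i, (k+1) p_i)` still undefined after step `i`. -/
def oxJ (p : ℕ → ℕ) (i : ℕ) (k : ℤ) : Set ℤ :=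
  {n : ℤ | k * (p i : ℤ) ≤ n ∧ n < (k + 1) * (p i : ℤ) ∧ n ∉ oxDefined p i}

/-- The Oxtoby sequence `z((p_i),(x_i))`: position `n` receives the value `x_i` where `i`
is the first step after which `n` is defined. -/
noncomputable def oxtoby (p : ℕ → ℕ) (x : ℕ → X) : ℤ → X :=
  fun n => x (sInf {i : ℕ | n ∈ oxDefined p i})

/-- The reverse of a bi-infinite sequence: `x⁻¹(n) = x(-n)`. -/
def revSeq (z : ℤ → X) : ℤ → X := fun n => z (-n)

/-- `[n0, n1]` is a maximal `p`-periodic block in `x`. -/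
def IsMaxPeriodicBlock (p : ℕ) (x : ℤ → X) (n0 n1 : ℤ) : Prop :=
  n0 ≤ n1 ∧ Set.Icc n0 n1 ⊆ PerSet p x ∧
    ∀ n0' n1' : ℤ, n0' ≤ n0 → n1 ≤ n1' → Set.Icc n0' n1' ⊆ PerSet p x →
      n0' = n0 ∧ n1' = n1

variable [TopologicalSpace X]

/-- The orbit closure of `z` in `X^ℤ` with the product topology. -/
def orbitClosure (z : ℤ → X) : Set (ℤ → X) :=
  closure {y : ℤ → X | ∃ m : ℤ, y = shiftZ m z}

/-- The ω-limit set of a sequence: all limits of convergent subsequences. -/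
def omegaLimitSet (x : ℕ → X) : Set X :=
  {a : X | ∃ φ : ℕ → ℕ, StrictMono φ ∧ Tendsto (x ∘ φ) atTop (𝓝 a)}

/-- Two sequences have the same topological type if exactly the same subsequences
converge. -/
def SameTopType {Y : Type*} [TopologicalSpace Y] (x : ℕ → X) (y : ℕ → Y) : Prop :=
  ∀ φ : ℕ → ℕ, StrictMono φ →
    ((∃ a, Tendsto (x ∘ φ) atTop (𝓝 a)) ↔ (∃ a, Tendsto (y ∘ φ) atTop (𝓝 a)))

/-- `f` is a conjugacy between the shift-invariant sets `A` and `B`: a homeomorphism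
from `A` onto `B` commuting with the shift. -/
def IsConjugacy (A B : Set (ℤ → X)) (f : (ℤ → X) → (ℤ → X)) : Prop :=
  Set.MapsTo f A B ∧ ContinuousOn f A ∧
    (∃ g : (ℤ → X) → (ℤ → X), Set.MapsTo g B A ∧ ContinuousOn g B ∧
      (∀ a ∈ A, g (f a) = a) ∧ (∀ b ∈ B, f (g b) = b)) ∧
    ∀ a ∈ A, f (shiftZ 1 a) = shiftZ 1 (f a)

/-- The `m`-th iterate (for `m : ℤ`) of a self-homeomorphism. -/
def iterZ {Y : Type*} [TopologicalSpace Y] (f : Y ≃ₜ Y) (m : ℤ) (a : Y) : Y :=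
  ((f.toEquiv ^ m : Equiv.Perm Y)) a

end Defs



section A1
variable {X : Type*} [TopologicalSpace X]

lemma iterZ_add (f : X ≃ₜ X) (m n : ℤ) (a : X) :
    iterZ f (m + n) a = iterZ f m (iterZ f n a) := by
  simp [iterZ, zpow_add, Equiv.Perm.mul_apply]

lemma iterZ_zero (f : X ≃ₜ X) (a : X) : iterZ f 0 a = a := by
  simp [iterZ]

lemma iterZ_one (f : X ≃ₜ X) (a : X) : iterZ f 1 a = f a := by
  simp [iterZ]

lemma iterZ_succ (f : X ≃ₜ X) (m : ℤ) (a : X) :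
    iterZ f (m + 1) a = f (iterZ f m a) := by
  rw [add_comm, iterZ_add, iterZ_one]

lemma iterZ_continuous (f : X ≃ₜ X) (m : ℤ) : Continuous (iterZ f m) := by
  induction m using Int.induction_on with
  | zero => simpa [funext (iterZ_zero f)] using (continuous_id' : Continuous fun a : X => a)
  | succ k ih =>
      have : (iterZ f ((k : ℤ) + 1)) = f ∘ iterZ f k := funext fun a => iterZ_succ f k a
      rw [this]; exact f.continuous.comp ih
  | pred k ih =>
      have h1 : ∀ a, iterZ f (-(k : ℤ) - 1) a = f.symm (iterZ f (-(k : ℤ)) a) := by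
        intro a
        have := iterZ_succ f (-(k : ℤ) - 1) a
        rw [sub_add_cancel] at this
        rw [this, Homeomorph.symm_apply_apply]
      rw [funext h1]
      exact f.symm.continuous.comp ih

lemma tendsto_of_evenodd {s : ℕ → X} {L : X}
    (he : Tendsto (fun k => s (2 * k)) atTop (𝓝 L))
    (ho : Tendsto (fun k => s (2 * k + 1)) atTop (𝓝 L)) :
    Tendsto s atTop (𝓝 L) := by
  rw [tendsto_atTop'] at he ho ⊢
  intro U hU
  obtain ⟨N1, h1⟩ := he U hU
  obtain ⟨N2, h2⟩ := ho U hU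
  refine ⟨2 * N1 + 2 * N2 + 2, fun n hn => ?_⟩
  rcases Nat.even_or_odd n with ⟨k, hk⟩ | ⟨k, hk⟩
  · have hk' : n = 2 * k := by omega
    rw [hk']; exact h1 k (by omega)
  · rw [hk]; exact h2 k (by omega)

end A1

lemma exists_strictmono_selection {P : ℕ → ℕ → Prop}
    (h : ∀ k N, ∃ n, N ≤ n ∧ P k n) :
    ∃ m : ℕ → ℕ, StrictMono m ∧ (∀ k, 1 ≤ m k) ∧ ∀ k, P k (m k) := by
  let m : ℕ → ℕ := fun k =>
    Nat.rec (Classical.choose (h 0 1)) (fun k ih => Classical.choose (h (k + 1) (ih + 1))) k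
  have h0 : 1 ≤ m 0 ∧ P 0 (m 0) := Classical.choose_spec (h 0 1)
  have hs : ∀ k, m k + 1 ≤ m (k + 1) ∧ P (k + 1) (m (k + 1)) := fun k =>
    Classical.choose_spec (h (k + 1) (m k + 1))
  have hmono : StrictMono m := strictMono_nat_of_lt_succ fun k => (hs k).1
  refine ⟨m, hmono, fun k => le_trans h0.1 (hmono.monotone (Nat.zero_le k)), fun k => ?_⟩
  cases k with
  | zero => exact h0.2
  | succ k => exact (hs k).2

section Dens
variable {X : Type*} [MetricSpace X] [CompactSpace X]

lemma dist_orbit_lt (f : X ≃ₜ X) (hf : ∀ a : X, Dense (Set.range fun n : ℤ => iterZ f n a))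
    (x : X) (z : X) (N : ℕ) {ε : ℝ} (hε : 0 < ε) :
    ∃ n : ℕ, N ≤ n ∧ dist (iterZ f (n : ℤ) x) z < ε := by
  obtain ⟨a, -, ψ, hψ, hlim⟩ :=
    IsCompact.tendsto_subseq (s := Set.univ) isCompact_univ
      (x := fun n : ℕ => iterZ f (n : ℤ) x) (fun n => Set.mem_univ _)
  have hda : DenseRange (fun n : ℤ => iterZ f n a) := hf a
  obtain ⟨j, hj⟩ := hda.exists_dist_lt z (half_pos hε)
  have ht : Tendsto (fun k => iterZ f j (iterZ f (ψ k : ℤ) x)) atTop (𝓝 (iterZ f j a)) :=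
    ((iterZ_continuous f j).tendsto a).comp hlim
  obtain ⟨K1, hK1⟩ := (Metric.tendsto_atTop.mp ht) (ε / 2) (half_pos hε)
  set k := max K1 (N + j.natAbs) with hk
  have hψk : (k : ℕ) ≤ ψ k := hψ.le_apply
  have hnn : 0 ≤ j + (ψ k : ℤ) := by
    have : (N : ℤ) + j.natAbs ≤ (ψ k : ℤ) := by exact_mod_cast le_trans (le_max_right _ _) hψk
    omega
  refine ⟨(j + (ψ k : ℤ)).toNat, ?_, ?_⟩
  · have : (N : ℤ) + j.natAbs ≤ (ψ k : ℤ) := by exact_mod_cast le_trans (le_max_right _ _) hψk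
    omega
  · have hcast : ((j + (ψ k : ℤ)).toNat : ℤ) = j + (ψ k : ℤ) := Int.toNat_of_nonneg hnn
    rw [hcast, iterZ_add]
    calc dist (iterZ f j (iterZ f (ψ k : ℤ) x)) z
        ≤ dist (iterZ f j (iterZ f (ψ k : ℤ) x)) (iterZ f j a) + dist (iterZ f j a) z :=
          dist_triangle _ _ _
      _ < ε / 2 + ε / 2 := by
          have h1 := hK1 k (le_max_left _ _)
          have h2 : dist (iterZ f j a) z < ε / 2 := by rw [dist_comm]; exact hj
          linarith
      _ = ε := add_halves ε

lemma exists_approx_seq (f : X ≃ₜ X) (hf : ∀ a : X, Dense (Set.range fun n : ℤ => iterZ f n a))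
    (x : X) (z : X) :
    ∃ n : ℕ → ℕ, StrictMono n ∧ (∀ k, 1 ≤ n k) ∧
      Tendsto (fun k => iterZ f (n k : ℤ) x) atTop (𝓝 z) := by
  obtain ⟨m, hm, hm1, hmP⟩ := exists_strictmono_selection
    (P := fun k n => dist (iterZ f (n : ℤ) x) z < 1 / (k + 1))
    (fun k N => dist_orbit_lt f hf x z N (by positivity))
  refine ⟨m, hm, hm1, tendsto_iff_dist_tendsto_zero.mpr ?_⟩
  exact squeeze_zero (fun k => dist_nonneg) (fun k => (hmP k).le)
    tendsto_one_div_add_atTop_nhds_zero_nat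

end Dens

def ilvSeq {Z : Type*} [TopologicalSpace Z] (f : Z ≃ₜ Z) (x : Z) : ℕ → Z :=
  fun n => if n % 2 = 0 then x else iterZ f ((n / 2 : ℕ) + 1 : ℤ) x

section Transfer
set_option linter.unusedSectionVars false
variable {X Y : Type*} [MetricSpace X] [CompactSpace X] [MetricSpace Y] [CompactSpace Y]
variable (f : X ≃ₜ X) (g : Y ≃ₜ Y) (x : X) (y : Y)


lemma ilv_odd {m : ℕ} (hm : 1 ≤ m) :
    ilvSeq f x (2 * m - 1) = iterZ f (m : ℤ) x := by
  rw [ilvSeq, if_neg (by omega)]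
  congr 1
  omega

lemma ilv_even {m : ℕ} : ilvSeq f x (2 * m) = x := if_pos (by omega)

lemma transferA (hST : SameTopType (ilvSeq f x) (ilvSeq g y))
    (n : ℕ → ℕ) (hn : StrictMono n) (h1 : ∀ k, 1 ≤ n k) :
    (∃ L, Tendsto (fun k => iterZ f (n k : ℤ) x) atTop (𝓝 L)) ↔
      (∃ L, Tendsto (fun k => iterZ g (n k : ℤ) y) atTop (𝓝 L)) := by
  have hφ : StrictMono fun k => 2 * n k - 1 := fun a b hab => by
    have h2 := hn hab; have h3 := h1 a; dsimp only; omega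
  have key := hST _ hφ
  have e1 : ((ilvSeq f x) ∘ fun k => 2 * n k - 1) = fun k => iterZ f (n k : ℤ) x :=
    funext fun k => ilv_odd f x (h1 k)
  have e2 : ((ilvSeq g y) ∘ fun k => 2 * n k - 1) = fun k => iterZ g (n k : ℤ) y :=
    funext fun k => ilv_odd g y (h1 k)
  rwa [e1, e2] at key

lemma transferB (hST : SameTopType (ilvSeq f x) (ilvSeq g y))
    (n : ℕ → ℕ) (hn : StrictMono n) (h1 : ∀ k, 1 ≤ n k)
    (hu : Tendsto (fun k => iterZ f (n k : ℤ) x) atTop (𝓝 x)) :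
    Tendsto (fun k => iterZ g (n k : ℤ) y) atTop (𝓝 y) := by
  set φ : ℕ → ℕ := fun k => if k % 2 = 0 then 2 * n (k / 2) - 2 else 2 * n (k / 2) - 1 with hφdef
  have heval0 : ∀ j, φ (2 * j) = 2 * (n j - 1) := by
    intro j
    have h1j := h1 j
    simp only [hφdef]
    rw [if_pos (by omega)]
    have e : (2 * j) / 2 = j := by omega
    rw [e]; omega
  have heval1 : ∀ j, φ (2 * j + 1) = 2 * n j - 1 := by
    intro j
    simp only [hφdef]
    rw [if_neg (by omega)]
    have e : (2 * j + 1) / 2 = j := by omega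
    rw [e]
  have hφ : StrictMono φ := by
    apply strictMono_nat_of_lt_succ
    intro k
    rcases Nat.even_or_odd k with ⟨j, hj⟩ | ⟨j, hj⟩
    · have hk : k = 2 * j := by omega
      rw [hk, show 2 * j + 1 = 2 * j + 1 from rfl, heval0 j, heval1 j]
      have := h1 j; omega
    · rw [hj, show 2 * j + 1 + 1 = 2 * (j + 1) from by ring, heval1 j, heval0 (j + 1)]
      have := h1 j; have : n j < n (j + 1) := hn (by omega); omega
  have hφeven : ∀ k, (ilvSeq f x ∘ φ) (2 * k) = x := fun k => by
    simp only [Function.comp_apply, heval0 k]; exact ilv_even f x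
  have hφodd : ∀ k, (ilvSeq f x ∘ φ) (2 * k + 1) = iterZ f (n k : ℤ) x := fun k => by
    simp only [Function.comp_apply, heval1 k]; exact ilv_odd f x (h1 k)
  have hφevenY : ∀ k, (ilvSeq g y ∘ φ) (2 * k) = y := fun k => by
    simp only [Function.comp_apply, heval0 k]; exact ilv_even g y
  have hφoddY : ∀ k, (ilvSeq g y ∘ φ) (2 * k + 1) = iterZ g (n k : ℤ) y := fun k => by
    simp only [Function.comp_apply, heval1 k]; exact ilv_odd g y (h1 k)
  have hconv : Tendsto (ilvSeq f x ∘ φ) atTop (𝓝 x) := by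
    apply tendsto_of_evenodd
    · exact Tendsto.congr (fun k => (hφeven k).symm) tendsto_const_nhds
    · exact Tendsto.congr (fun k => (hφodd k).symm) hu
  obtain ⟨L, hL⟩ := (hST φ hφ).mp ⟨x, hconv⟩
  have hm2 : StrictMono fun k : ℕ => 2 * k := fun a b hab => by dsimp only; omega
  have hm2' : StrictMono fun k : ℕ => 2 * k + 1 := fun a b hab => by dsimp only; omega
  have heY : Tendsto (fun k => (ilvSeq g y ∘ φ) (2 * k)) atTop (𝓝 L) :=
    hL.comp hm2.tendsto_atTop
  have heY' : Tendsto (fun k => (ilvSeq g y ∘ φ) (2 * k)) atTop (𝓝 y) :=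
    Tendsto.congr (fun k => (hφevenY k).symm) tendsto_const_nhds
  have hLy : L = y := tendsto_nhds_unique heY heY'
  have hoY : Tendsto (fun k => (ilvSeq g y ∘ φ) (2 * k + 1)) atTop (𝓝 L) :=
    hL.comp hm2'.tendsto_atTop
  rw [hLy] at hoY
  exact Tendsto.congr (fun k => hφoddY k) hoY

lemma transferC (hST : SameTopType (ilvSeq f x) (ilvSeq g y))
    (n1 n2 : ℕ → ℕ) (hn1 : StrictMono n1) (hn2 : StrictMono n2)
    (h11 : ∀ k, 1 ≤ n1 k) (h12 : ∀ k, 1 ≤ n2 k) (z : X)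
    (hu1 : Tendsto (fun k => iterZ f (n1 k : ℤ) x) atTop (𝓝 z))
    (hu2 : Tendsto (fun k => iterZ f (n2 k : ℤ) x) atTop (𝓝 z))
    {L1 L2 : Y}
    (hv1 : Tendsto (fun k => iterZ g (n1 k : ℤ) y) atTop (𝓝 L1))
    (hv2 : Tendsto (fun k => iterZ g (n2 k : ℤ) y) atTop (𝓝 L2)) :
    L1 = L2 := by
  let e : ℕ → ℕ := fun k => Nat.rec 0 (fun _ ih => n2 (n1 ih + 1) + 1) k
  have he_succ : ∀ k, e (k + 1) = n2 (n1 (e k) + 1) + 1 := fun k => rfl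
  have he_mono : StrictMono e := by
    apply strictMono_nat_of_lt_succ
    intro k
    have h1 : n1 (e k) ≥ e k := hn1.le_apply
    have h2 : n2 (n1 (e k) + 1) ≥ n1 (e k) + 1 := hn2.le_apply
    rw [he_succ]; omega
  set o : ℕ → ℕ := fun k => n1 (e k) + 1 with ho_def
  have ho_mono : StrictMono o := fun a b hab => by
    have := hn1 (he_mono hab); simp only [ho_def]; omega
  set χ : ℕ → ℕ := fun k => if k % 2 = 0 then n1 (e (k / 2)) else n2 (o (k / 2)) with hχ_def
  have hχ0 : ∀ j, χ (2 * j) = n1 (e j) := by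
    intro j; simp only [hχ_def]; rw [if_pos (by omega)]
    have : (2 * j) / 2 = j := by omega
    rw [this]
  have hχ1 : ∀ j, χ (2 * j + 1) = n2 (o j) := by
    intro j; simp only [hχ_def]; rw [if_neg (by omega)]
    have : (2 * j + 1) / 2 = j := by omega
    rw [this]
  have hχmono : StrictMono χ := by
    apply strictMono_nat_of_lt_succ
    intro k
    rcases Nat.even_or_odd k with ⟨j, hj⟩ | ⟨j, hj⟩
    · have hk : k = 2 * j := by omega
      rw [hk, hχ0 j, hχ1 j]
      have h2 := hn2.le_apply (x := o j)
      have h3 : o j = n1 (e j) + 1 := rfl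
      omega
    · rw [hj, show 2 * j + 1 + 1 = 2 * (j + 1) from by ring, hχ1 j, hχ0 (j + 1)]
      have h1 : e (j + 1) = n2 (o j) + 1 := he_succ j
      have h2 : n1 (e (j + 1)) ≥ e (j + 1) := hn1.le_apply
      omega
  have hχ1' : ∀ k, 1 ≤ χ k := by
    intro k
    rcases Nat.even_or_odd k with ⟨j, hj⟩ | ⟨j, hj⟩
    · have hk : k = 2 * j := by omega
      rw [hk, hχ0 j]; exact h11 _
    · rw [hj, hχ1 j]; exact h12 _
  have huχ : Tendsto (fun k => iterZ f (χ k : ℤ) x) atTop (𝓝 z) := by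
    apply tendsto_of_evenodd
    · refine Tendsto.congr (fun k => ?_) (hu1.comp he_mono.tendsto_atTop)
      simp only [Function.comp_apply, hχ0 k]
    · refine Tendsto.congr (fun k => ?_) (hu2.comp ho_mono.tendsto_atTop)
      simp only [Function.comp_apply, hχ1 k]
  obtain ⟨L, hL⟩ := (transferA f g x y hST χ hχmono hχ1').mp ⟨z, huχ⟩
  have hLe : Tendsto (fun k => iterZ g (χ (2 * k) : ℤ) y) atTop (𝓝 L) := by
    have := hL.comp ((by exact fun a b hab => by dsimp only; omega :
      StrictMono fun k : ℕ => 2 * k)).tendsto_atTop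
    exact this
  have hLo : Tendsto (fun k => iterZ g (χ (2 * k + 1) : ℤ) y) atTop (𝓝 L) := by
    have := hL.comp ((by exact fun a b hab => by dsimp only; omega :
      StrictMono fun k : ℕ => 2 * k + 1)).tendsto_atTop
    exact this
  have hL1 : L1 = L := by
    refine tendsto_nhds_unique (hv1.comp he_mono.tendsto_atTop) ?_
    refine Tendsto.congr (fun k => ?_) hLe
    simp only [Function.comp_apply, hχ0 k]
  have hL2 : L2 = L := by
    refine tendsto_nhds_unique (hv2.comp ho_mono.tendsto_atTop) ?_
    refine Tendsto.congr (fun k => ?_) hLo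
    simp only [Function.comp_apply, hχ1 k]
  rw [hL1, hL2]

lemma half (hf : ∀ a : X, Dense (Set.range fun n : ℤ => iterZ f n a))
    (hST : SameTopType (ilvSeq f x) (ilvSeq g y)) :
    ∃ h : X → Y, Continuous h ∧ (∀ z, h (f z) = g (h z)) ∧ h x = y ∧
      ∀ n : ℕ → ℕ, StrictMono n → (∀ k, 1 ≤ n k) → ∀ z : X,
        Tendsto (fun k => iterZ f (n k : ℤ) x) atTop (𝓝 z) →
        Tendsto (fun k => iterZ g (n k : ℤ) y) atTop (𝓝 (h z)) := by
  obtain ⟨nz, hz1, hz2, hz3⟩ :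
      ∃ nz : X → ℕ → ℕ, (∀ z, StrictMono (nz z)) ∧ (∀ z k, 1 ≤ nz z k) ∧
        ∀ z, Tendsto (fun k => iterZ f (nz z k : ℤ) x) atTop (𝓝 z) := by
    choose nz h1 h2 h3 using exists_approx_seq f hf x
    exact ⟨nz, h1, h2, h3⟩
  have hex : ∀ z, ∃ L, Tendsto (fun k => iterZ g (nz z k : ℤ) y) atTop (𝓝 L) := fun z =>
    (transferA f g x y hST _ (hz1 z) (hz2 z)).mp ⟨z, hz3 z⟩
  choose h hh using hex
  have hP : ∀ n : ℕ → ℕ, StrictMono n → (∀ k, 1 ≤ n k) → ∀ z : X,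
      Tendsto (fun k => iterZ f (n k : ℤ) x) atTop (𝓝 z) →
      Tendsto (fun k => iterZ g (n k : ℤ) y) atTop (𝓝 (h z)) := by
    intro n hn h1 z hz
    obtain ⟨L, hL⟩ := (transferA f g x y hST n hn h1).mp ⟨z, hz⟩
    have : L = h z :=
      transferC f g x y hST n (nz z) hn (hz1 z) h1 (hz2 z) z hz (hz3 z) hL (hh z)
    rwa [this] at hL
  have hxy : h x = y :=
    tendsto_nhds_unique (hh x) (transferB f g x y hST _ (hz1 x) (hz2 x) (hz3 x))
  have heq : ∀ z, h (f z) = g (h z) := by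
    intro z
    have hn' : StrictMono fun k => nz z k + 1 := fun a b hab => by
      have := hz1 z hab; dsimp only; omega
    have h1' : ∀ k, 1 ≤ nz z k + 1 := fun k => by omega
    have huz : Tendsto (fun k => iterZ f ((nz z k + 1 : ℕ) : ℤ) x) atTop (𝓝 (f z)) := by
      refine Tendsto.congr (fun k => ?_) ((f.continuous.tendsto z).comp (hz3 z))
      simp only [Function.comp_apply]
      rw [show ((nz z k + 1 : ℕ) : ℤ) = (nz z k : ℤ) + 1 by push_cast; ring, iterZ_succ]
    have hv1 := hP _ hn' h1' (f z) huz
    have hv2 : Tendsto (fun k => iterZ g ((nz z k + 1 : ℕ) : ℤ) y) atTop (𝓝 (g (h z))) := by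
      refine Tendsto.congr (fun k => ?_) ((g.continuous.tendsto (h z)).comp (hh z))
      simp only [Function.comp_apply]
      rw [show ((nz z k + 1 : ℕ) : ℤ) = (nz z k : ℤ) + 1 by push_cast; ring, iterZ_succ]
    exact tendsto_nhds_unique hv1 hv2
  have hc : Continuous h := by
    rw [continuous_iff_seqContinuous]
    intro zs p hzs
    have hsel : ∀ j N : ℕ, ∃ m : ℕ, N ≤ m ∧
        (dist (iterZ f (m : ℤ) x) (zs j) < 1 / (j + 1) ∧
          dist (iterZ g (m : ℤ) y) (h (zs j)) < 1 / (j + 1)) := by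
      intro j N
      have hpos : (0 : ℝ) < 1 / (j + 1) := by positivity
      obtain ⟨K1, hK1⟩ := Metric.tendsto_atTop.mp (hz3 (zs j)) _ hpos
      obtain ⟨K2, hK2⟩ := Metric.tendsto_atTop.mp (hh (zs j)) _ hpos
      refine ⟨nz (zs j) (max N (max K1 K2)), ?_, ?_, ?_⟩
      · exact le_trans (le_max_left _ _) (hz1 (zs j)).le_apply
      · exact hK1 _ (le_trans (le_max_left _ _) (le_max_right _ _))
      · exact hK2 _ (le_trans (le_max_right _ _) (le_max_right _ _))
    obtain ⟨m, hm_mono, hm1, hmP⟩ := exists_strictmono_selection hsel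
    have hup : Tendsto (fun k => iterZ f (m k : ℤ) x) atTop (𝓝 p) := by
      rw [tendsto_iff_dist_tendsto_zero]
      refine squeeze_zero (fun j => dist_nonneg)
        (g := fun j => 1 / (j + 1) + dist (zs j) p) (fun j => ?_) ?_
      · have hb := (hmP j).1
        have := dist_triangle (iterZ f (m j : ℤ) x) (zs j) p
        linarith
      · have := tendsto_one_div_add_atTop_nhds_zero_nat.add
          (tendsto_iff_dist_tendsto_zero.mp hzs)
        simpa using this
    have hvp := hP m hm_mono hm1 p hup
    rw [tendsto_iff_dist_tendsto_zero]
    refine squeeze_zero (fun j => dist_nonneg)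
      (g := fun j => 1 / (j + 1) + dist (iterZ g (m j : ℤ) y) (h p)) (fun j => ?_) ?_
    · have hb := (hmP j).2
      have ht := dist_triangle (h (zs j)) (iterZ g (m j : ℤ) y) (h p)
      have hcomm : dist (h (zs j)) (iterZ g (m j : ℤ) y)
          = dist (iterZ g (m j : ℤ) y) (h (zs j)) := dist_comm _ _
      simp only [Function.comp_apply]
      linarith
    · have := tendsto_one_div_add_atTop_nhds_zero_nat.add
        (tendsto_iff_dist_tendsto_zero.mp hvp)
      simpa using this
  exact ⟨h, hc, heq, hxy, hP⟩

end Transfer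

/-- Corollary `BRBR`: pointed minimal compact systems `(X,f,x)` and
`(Y,g,y)` are conjugate iff the interleaved sequences `(x, f(x), x, f²(x), x, f³(x), …)`
and `(y, g(y), y, g²(y), y, g³(y), …)` have the same topological type. -/
theorem pointed_min_conjugacy_iff_interleaved {X Y : Type*}
    [MetricSpace X] [CompactSpace X] [MetricSpace Y] [CompactSpace Y]
    (f : X ≃ₜ X) (g : Y ≃ₜ Y)
    (hf : ∀ a : X, Dense (Set.range fun n : ℤ => iterZ f n a))
    (hg : ∀ b : Y, Dense (Set.range fun n : ℤ => iterZ g n b))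
    (x : X) (y : Y) :
    (∃ h : X ≃ₜ Y, (∀ a : X, h (f a) = g (h a)) ∧ h x = y) ↔
      SameTopType
        (fun n : ℕ => if n % 2 = 0 then x else iterZ f ((n / 2 : ℕ) + 1 : ℤ) x)
        (fun n : ℕ => if n % 2 = 0 then y else iterZ g ((n / 2 : ℕ) + 1 : ℤ) y) := by
  have hAx : (fun n : ℕ => if n % 2 = 0 then x else iterZ f ((n / 2 : ℕ) + 1 : ℤ) x)
      = ilvSeq f x := rfl
  have hAy : (fun n : ℕ => if n % 2 = 0 then y else iterZ g ((n / 2 : ℕ) + 1 : ℤ) y)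
      = ilvSeq g y := rfl
  rw [hAx, hAy]
  constructor
  · rintro ⟨h, hcomm, hx⟩
    have key : ∀ m : ℕ, h (iterZ f (m : ℤ) x) = iterZ g (m : ℤ) y := by
      intro m
      induction m with
      | zero => simpa [iterZ_zero] using hx
      | succ k ih =>
          rw [show ((k + 1 : ℕ) : ℤ) = (k : ℤ) + 1 by push_cast; ring,
            iterZ_succ, iterZ_succ, hcomm, ih]
    have hab : ∀ n : ℕ, ilvSeq g y n = h (ilvSeq f x n) := by
      intro n
      by_cases hp : n % 2 = 0
      · simp only [ilvSeq, if_pos hp]; exact hx.symm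
      · simp only [ilvSeq, if_neg hp]
        rw [show ((n / 2 : ℕ) : ℤ) + 1 = ((n / 2 + 1 : ℕ) : ℤ) by push_cast; ring]
        exact (key (n / 2 + 1)).symm
    intro φ hφ
    constructor
    · rintro ⟨a0, ha0⟩
      exact ⟨h a0, Tendsto.congr (fun k => (hab (φ k)).symm)
        ((h.continuous.tendsto a0).comp ha0)⟩
    · rintro ⟨b0, hb0⟩
      refine ⟨h.symm b0, Tendsto.congr (fun k => ?_)
        ((h.symm.continuous.tendsto b0).comp hb0)⟩
      simp only [Function.comp_apply]
      rw [hab (φ k), Homeomorph.symm_apply_apply]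
  · intro hST
    obtain ⟨h, hc, heq, hxy, hP⟩ := half f g x y hf hST
    have hST' : SameTopType (ilvSeq g y) (ilvSeq f x) := fun φ hφ => (hST φ hφ).symm
    obtain ⟨h', hc', heq', hxy', hP'⟩ := half g f y x hg hST'
    have li : Function.LeftInverse h' h := by
      intro z
      obtain ⟨n, hn, h1, hu⟩ := exists_approx_seq f hf x z
      exact tendsto_nhds_unique (hP' n hn h1 (h z) (hP n hn h1 z hu)) hu
    have ri : Function.RightInverse h' h := by
      intro w
      obtain ⟨n, hn, h1, hu⟩ := exists_approx_seq g hg y w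
      exact tendsto_nhds_unique (hP n hn h1 (h' w) (hP' n hn h1 w hu)) hu
    exact ⟨⟨⟨h, h', li, ri⟩, hc, hc'⟩, heq, hxy⟩
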